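/- Let A ∈ ℝ^{m×l×n}, X⋆ ∈ ℝ^{l×p×n}, B⋆ = A∗X⋆, and B = B⋆ + B_corr ∈ ℝ^{m×p×n}, where the corruption set C = {(i,j,h) : (B_corr)_{ijh} ≠ 0} has size |C| = β·mpn. Let 0 < q < 1 − β and let X ∈ ℝ^{l×p×n} be arbitrary. Then the q-quantile of the residual tensor E = A∗X − B satisfies Q_q(E) ≤ (σ_max(bcirc(A)) / √(mpn(1−β−q))) · ‖X − X⋆‖_F. -/

import Mathlib

open scoped BigOperators
open Matrix

/-- A real third-order tensor of size `a × b × c` (zero-indexed). -/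
abbrev Tensor (a b c : ℕ) := Fin a → Fin b → Fin c → ℝ

/-- Frobenius norm of a third-order tensor: the square root of the sum of
squares of all entries. -/
noncomputable def frob {a b c : ℕ} (X : Tensor a b c) : ℝ :=
  Real.sqrt (∑ i, ∑ j, ∑ k, (X i j k) ^ 2)

/-- The block-circulant matrix of a third-order tensor: the `(r, s)` block is
the frontal slice of index `r - s (mod c)` (zero-indexed). -/
def bcirc {a b c : ℕ} (A : Tensor a b c) : Matrix (Fin c × Fin a) (Fin c × Fin b) ℝ :=
  fun ri sj => A ri.2 sj.2 (ri.1 - sj.1)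

/-- Unfolding: stack the frontal slices of a tensor vertically into a matrix. -/
def unfoldT {a b c : ℕ} (X : Tensor a b c) : Matrix (Fin c × Fin a) (Fin b) ℝ :=
  fun ki j => X ki.2 j ki.1

/-- The t-product of two third-order tensors:
`A ∗ X = fold (bcirc A * unfold X)`. -/
noncomputable def tMul {a b c d : ℕ} (A : Tensor a b c) (X : Tensor b d c) : Tensor a d c :=
  fun i j k => (bcirc A * unfoldT X) (k, i) j

/-- The largest singular value of a real matrix: the square root of the largest
eigenvalue of the symmetric positive semidefinite matrix `Mᵀ * M`. -/
noncomputable def sigmaMax {ι κ : Type*} [Fintype ι] [Fintype κ] [DecidableEq κ]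
    (M : Matrix ι κ ℝ) : ℝ :=
  Real.sqrt (⨆ i, ((by simpa using Matrix.isHermitian_conjTranspose_mul_self M) :
    (Mᵀ * M).IsHermitian).eigenvalues i)

/-- The empirical `q`-quantile of the absolute values of the entries of a
third-order tensor: the `⌊q · abc⌋`-th smallest element (1-indexed) of the
multiset `{|E i j k|}`. -/
noncomputable def quantile {a b c : ℕ} (q : ℝ) (E : Tensor a b c) : ℝ :=
  (((Finset.univ : Finset (Fin a × Fin b × Fin c)).val.map
      (fun t => |E t.1 t.2.1 t.2.2|)).sort (· ≤ ·)).getD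
    (⌊q * ((a * b * c : ℕ) : ℝ)⌋.toNat - 1) 0

private lemma hermT {ι κ : Type*} [Fintype ι] [Fintype κ] [DecidableEq κ]
    (M : Matrix ι κ ℝ) : (Mᵀ * M).IsHermitian := by
  simpa using Matrix.isHermitian_conjTranspose_mul_self M

private lemma mulVec_sq_sum_le {ι κ : Type*} [Fintype ι] [Fintype κ] [DecidableEq κ]
    (M : Matrix ι κ ℝ) (v : κ → ℝ) :
    ∑ i, (M.mulVec v i)^2 ≤
      (⨆ j, (hermT M).eigenvalues j) * ∑ k, (v k)^2 := by
  set hS := hermT M with hhS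
  set U : Matrix κ κ ℝ := (hS.eigenvectorUnitary : Matrix κ κ ℝ) with hU
  set w : κ → ℝ := (star U) *ᵥ v with hw
  have hstar : star U = Uᵀ := by ext i j; simp [Matrix.star_apply]
  have hct : Mᴴ = Mᵀ := Matrix.conjTranspose_eq_transpose_of_trivial M
  have hkey : ∑ i, (M.mulVec v i)^2 = v ⬝ᵥ ((Mᴴ*M) *ᵥ v) := by
    rw [hct, ← Matrix.mulVec_mulVec, Matrix.dotProduct_mulVec, Matrix.vecMul_transpose]
    simp [dotProduct, sq]
  have hUU : U * star U = 1 := Unitary.coe_mul_star_self _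
  have hdot : ∀ x : κ → ℝ, v ⬝ᵥ (U *ᵥ x) = w ⬝ᵥ x := by
    intro x
    rw [hw, hstar, Matrix.dotProduct_mulVec, Matrix.mulVec_transpose]
  have hquad : v ⬝ᵥ ((Mᴴ*M) *ᵥ v) = ∑ j, hS.eigenvalues j * (w j)^2 := by
    conv_lhs => rw [hct, hS.spectral_theorem, Unitary.conjStarAlgAut_apply]
    rw [← Matrix.mulVec_mulVec, ← Matrix.mulVec_mulVec, hdot]
    simp only [dotProduct, Matrix.mulVec_diagonal, ← hw, sq]
    exact Finset.sum_congr rfl (fun x _ => by simp; ring)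
  have hUw : U *ᵥ w = v := by rw [hw, Matrix.mulVec_mulVec, hUU, Matrix.one_mulVec]
  have hnorm : ∑ j, (w j)^2 = ∑ k, (v k)^2 := by
    have h2 : v ⬝ᵥ (U *ᵥ w) = w ⬝ᵥ w := hdot w
    rw [hUw] at h2
    simpa [dotProduct, sq] using h2.symm
  have hbdd : BddAbove (Set.range hS.eigenvalues) := Set.Finite.bddAbove (Set.finite_range _)
  have hle : ∀ j, hS.eigenvalues j ≤ ⨆ j, hS.eigenvalues j := fun j => le_ciSup hbdd j
  rw [hkey, hquad, ← hnorm]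
  calc ∑ j, hS.eigenvalues j * (w j)^2 ≤ ∑ j, (⨆ j, hS.eigenvalues j) * (w j)^2 :=
        Finset.sum_le_sum (fun j _ => mul_le_mul_of_nonneg_right (hle j) (sq_nonneg _))
    _ = (⨆ j, hS.eigenvalues j) * ∑ j, (w j)^2 := by rw [Finset.mul_sum]

private lemma mul_sq_sum_le {ι κ ρ : Type*} [Fintype ι] [Fintype κ] [Fintype ρ] [DecidableEq κ]
    (M : Matrix ι κ ℝ) (W : Matrix κ ρ ℝ) :
    ∑ i, ∑ j, ((M * W) i j)^2 ≤
      (⨆ j, (hermT M).eigenvalues j) * ∑ k, ∑ j, (W k j)^2 := by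
  set c := ⨆ j, (hermT M).eigenvalues j with hc
  have hcol : ∀ j, ∑ i, ((M * W) i j)^2 ≤ c * ∑ k, (W k j)^2 := by
    intro j
    have h := mulVec_sq_sum_le M (fun k => W k j)
    have he : ∀ i, (M * W) i j = M.mulVec (fun k => W k j) i := by
      intro i; simp [Matrix.mul_apply, Matrix.mulVec, dotProduct]
    simpa [he] using h
  calc ∑ i, ∑ j, ((M * W) i j)^2 = ∑ j, ∑ i, ((M * W) i j)^2 := Finset.sum_comm
    _ ≤ ∑ j, c * ∑ k, (W k j)^2 := Finset.sum_le_sum (fun j _ => hcol j)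
    _ = c * ∑ j, ∑ k, (W k j)^2 := by rw [Finset.mul_sum]
    _ = c * ∑ k, ∑ j, (W k j)^2 := by rw [Finset.sum_comm]

private lemma filter_lt_get_le {L : List ℝ} (hs : L.Pairwise (· ≤ ·)) (idx : ℕ)
    (h : idx < L.length) :
    (L.filter (fun x => x < L.get ⟨idx, h⟩)).length ≤ idx := by
  set Q := L.get ⟨idx, h⟩ with hQ
  have hsplit : L.filter (fun x => decide (x < Q)) =
      (L.take idx).filter (fun x => decide (x < Q)) ++
      (L.drop idx).filter (fun x => decide (x < Q)) := by
    conv_lhs => rw [← List.take_append_drop idx L]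
    exact List.filter_append _ _
  have hdrop : (L.drop idx).filter (fun x => decide (x < Q)) = [] := by
    rw [List.filter_eq_nil_iff]
    intro a ha
    obtain ⟨i, hi, hget⟩ := List.mem_iff_getElem.mp ha
    have hlen : idx + i < L.length := by
      have := List.length_drop (i := idx) (l := L) ▸ hi
      omega
    have hrel : L[idx]'h ≤ L[idx + i]'hlen := by
      have := hs.rel_get_of_le (a := ⟨idx, h⟩) (b := ⟨idx + i, hlen⟩) (by simp)
      simpa using this
    rw [List.getElem_drop] at hget
    simp only [decide_eq_true_eq]
    rw [← hget]
    exact not_lt.mpr (by simpa [hQ] using hrel)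
  calc (L.filter (fun x => decide (x < Q))).length
      = ((L.take idx).filter (fun x => decide (x < Q))).length
        + ((L.drop idx).filter (fun x => decide (x < Q))).length := by
        rw [hsplit, List.length_append]
    _ ≤ (L.take idx).length + 0 := by
        rw [hdrop]; simp only [List.length_nil, add_zero]; exact List.length_filter_le _ _
    _ ≤ idx := by simp [List.length_take]

private lemma sum_tensor_eq {m p n : ℕ} (g : Fin m → Fin p → Fin n → ℝ) :
    ∑ t : Fin m × Fin p × Fin n, g t.1 t.2.1 t.2.2
      = ∑ ki : Fin n × Fin m, ∑ j, g ki.2 j ki.1 := by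
  have h1 : ∑ x : (Fin n × Fin m) × Fin p, g x.1.2 x.2 x.1.1
      = ∑ ki : Fin n × Fin m, ∑ j, g ki.2 j ki.1 := Fintype.sum_prod_type _
  rw [← h1]
  exact (Fintype.sum_equiv (⟨fun x => (x.1.2, x.2, x.1.1), fun t => ((t.2.2, t.1), t.2.1),
      fun x => rfl, fun t => rfl⟩ : ((Fin n × Fin m) × Fin p) ≃ (Fin m × Fin p × Fin n))
    (fun x : (Fin n × Fin m) × Fin p => g x.1.2 x.2 x.1.1)
    (fun t : Fin m × Fin p × Fin n => g t.1 t.2.1 t.2.2) (fun x => rfl)).symm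

set_option maxHeartbeats 2000000 in
/-- Bounding the quantile value: if the corruption rate is `β` and
`0 < q < 1 - β`, then the `q`-quantile of the residual `E = A ∗ X - B`
satisfies `Q_q(E) ≤ σ_max(bcirc A) / √(mpn(1-β-q)) · ‖X - X⋆‖_F`. -/
theorem quantile_bound {m l p n : ℕ} (A : Tensor m l n) (Xstar : Tensor l p n)
    (Bcorr B : Tensor m p n) (hB : B = tMul A Xstar + Bcorr) (β q : ℝ)
    (hβ : ((Finset.univ.filter
        (fun t : Fin m × Fin p × Fin n => Bcorr t.1 t.2.1 t.2.2 ≠ 0)).card : ℝ)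
      = β * (m * p * n))
    (hq0 : 0 < q) (hq1 : q < 1 - β) (X : Tensor l p n) :
    quantile q (tMul A X - B) ≤
      sigmaMax (bcirc A) / Real.sqrt (m * p * n * (1 - β - q)) * frob (X - Xstar) := by
  set E : Tensor m p n := tMul A X - B with hE
  set Y : Tensor l p n := X - Xstar with hY
  set N : ℕ := m * p * n with hN
  have hNcast : ((N : ℕ) : ℝ) = (m:ℝ) * p * n := by rw [hN]; push_cast; ring
  set f : Fin m × Fin p × Fin n → ℝ := fun t => |E t.1 t.2.1 t.2.2| with hf
  set L : List ℝ := ((Finset.univ.val.map f).sort (· ≤ ·)) with hL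
  have hlen : L.length = N := by
    rw [hL, Multiset.length_sort, Multiset.card_map]
    simp [hN, Finset.card_univ, mul_assoc]
  set σ := sigmaMax (bcirc A) with hσ
  set F := frob Y with hF
  have hσ0 : 0 ≤ σ := Real.sqrt_nonneg _
  have hF0 : 0 ≤ F := Real.sqrt_nonneg _
  have hRHS : 0 ≤ σ / Real.sqrt ((m:ℝ) * p * n * (1 - β - q)) * F := by positivity
  have hquant : quantile q E = L.getD (⌊q * ((N:ℕ) : ℝ)⌋.toNat - 1) 0 := rfl
  rcases Nat.eq_zero_or_pos N with hN0 | hNpos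
  · rw [hquant]
    have hLnil : L = [] := List.length_eq_zero_iff.mp (by rw [hlen, hN0])
    rw [hLnil]
    simpa using hRHS
  have hNR : (0:ℝ) < (N:ℕ) := by exact_mod_cast hNpos
  have hβ0 : 0 ≤ β := by
    have hcard : (0:ℝ) ≤ β * ((m:ℝ)*p*n) := by rw [← hβ]; positivity
    rw [← hNcast] at hcard
    nlinarith
  set k : ℕ := (⌊q * ((N:ℕ) : ℝ)⌋).toNat with hk
  set idx : ℕ := k - 1 with hidx
  have hqN0 : 0 ≤ q * ((N:ℕ):ℝ) := by positivity
  have hkle : (k:ℝ) ≤ q * ((N:ℕ):ℝ) := by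
    have h2 : ((⌊q * ((N:ℕ):ℝ)⌋.toNat : ℤ) : ℝ) ≤ q * ((N:ℕ):ℝ) := by
      rw [Int.toNat_of_nonneg (Int.floor_nonneg.mpr hqN0)]
      exact Int.floor_le _
    exact_mod_cast h2
  have hqNlt : q * ((N:ℕ):ℝ) < ((N:ℕ):ℝ) := by nlinarith
  have hkN : k < N := by exact_mod_cast lt_of_le_of_lt hkle hqNlt
  have hidxN : idx < N := by omega
  have hidxq : (idx:ℝ) ≤ q * ((N:ℕ):ℝ) :=
    le_trans (by exact_mod_cast Nat.sub_le k 1) hkle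
  have hidxL : idx < L.length := by rw [hlen]; exact hidxN
  set Q := quantile q E with hQdef
  have hQget : Q = L.get ⟨idx, hidxL⟩ := by
    rw [hquant]
    simp [List.getD_eq_getElem?_getD, List.getElem?_eq_getElem hidxL]
  have hQ0 : 0 ≤ Q := by
    have hmem : Q ∈ Finset.univ.val.map f := by
      rw [← Multiset.sort_eq (Finset.univ.val.map f) (· ≤ ·)]
      rw [Multiset.mem_coe, ← hL]
      exact hQget ▸ List.get_mem L ⟨idx, hidxL⟩
    obtain ⟨t, _, ht⟩ := Multiset.mem_map.mp hmem
    rw [← ht]; exact abs_nonneg _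
  -- counting
  have hcount1 : ((Finset.univ.val.map f).filter (fun x => x < Q)).card ≤ idx := by
    have hsort : L.Pairwise (· ≤ ·) := by rw [hL]; exact Multiset.pairwise_sort _ _
    have h := filter_lt_get_le hsort idx hidxL
    rw [← Multiset.sort_eq (Finset.univ.val.map f) (· ≤ ·), ← hL,
      Multiset.filter_coe, Multiset.coe_card, hQget]
    simpa using h
  have hcount2 : (Finset.univ.filter (fun t => f t < Q)).card ≤ idx := by
    have heq : ((Finset.univ.val.map f).filter (fun x => x < Q)).card
        = (Finset.univ.filter (fun t => f t < Q)).card := by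
      rw [Multiset.filter_map, Multiset.card_map]
      rfl
    omega
  set Gge := Finset.univ.filter (fun t : Fin m × Fin p × Fin n => Q ≤ f t) with hGge
  have hcardU : (Finset.univ : Finset (Fin m × Fin p × Fin n)).card = N := by
    simp [hN, mul_assoc]
  have hGgecard : N - idx ≤ Gge.card := by
    have hsplitc := Finset.card_filter_add_card_filter_not
      (s := (Finset.univ : Finset (Fin m × Fin p × Fin n)))
      (p := fun t => f t < Q)
    have hGgeeq : Gge = Finset.univ.filter (fun t => ¬ (f t < Q)) := by
      rw [hGge]
      exact Finset.filter_congr (fun t _ => by rw [not_lt])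
    rw [hcardU] at hsplitc
    rw [hGgeeq]
    omega
  set C := Finset.univ.filter
    (fun t : Fin m × Fin p × Fin n => Bcorr t.1 t.2.1 t.2.2 ≠ 0) with hC
  set G := Finset.univ.filter
    (fun t : Fin m × Fin p × Fin n => Q ≤ f t ∧ Bcorr t.1 t.2.1 t.2.2 = 0) with hG
  have hsub : Gge ⊆ G ∪ C := by
    intro t ht
    rw [hGge, Finset.mem_filter] at ht
    rw [Finset.mem_union, hG, hC, Finset.mem_filter, Finset.mem_filter]
    by_cases h0 : Bcorr t.1 t.2.1 t.2.2 = 0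
    · exact Or.inl ⟨Finset.mem_univ _, ht.2, h0⟩
    · exact Or.inr ⟨Finset.mem_univ _, h0⟩
  have hGcard : Gge.card ≤ G.card + C.card :=
    le_trans (Finset.card_le_card hsub) (Finset.card_union_le _ _)
  have hCcast : (C.card : ℝ) = β * ((N:ℕ):ℝ) := by rw [hNcast]; exact hβ
  have hGR : ((N:ℕ):ℝ) * (1 - β - q) ≤ (G.card : ℝ) := by
    have h1 : N ≤ G.card + C.card + idx := by omega
    have h2 : ((N:ℕ):ℝ) ≤ (G.card : ℝ) + (C.card : ℝ) + (idx : ℝ) := by exact_mod_cast h1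
    nlinarith
  have hDpos : (0:ℝ) < ((N:ℕ):ℝ) * (1 - β - q) := by nlinarith
  -- residual equals clean residual on uncorrupted entries
  have hunf : unfoldT Y = unfoldT X - unfoldT Xstar := by
    ext ki j; simp [unfoldT, hY]
  have hEt : ∀ t : Fin m × Fin p × Fin n, Bcorr t.1 t.2.1 t.2.2 = 0 →
      f t = |tMul A Y t.1 t.2.1 t.2.2| := by
    intro t h0
    have hEv : E t.1 t.2.1 t.2.2 = tMul A Y t.1 t.2.1 t.2.2 := by
      rw [hE, hB]
      simp only [Pi.sub_apply, Pi.add_apply, tMul, hunf, Matrix.mul_sub, Matrix.sub_apply, h0]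
      ring
    rw [hf]; dsimp only; rw [hEv]
  -- frobenius and sigma facts
  have hFsq : F^2 = ∑ ki : Fin n × Fin l, ∑ j, (unfoldT Y ki j)^2 := by
    have h1 : F^2 = ∑ i, ∑ j, ∑ kk, (Y i j kk)^2 := by
      rw [hF, frob, Real.sq_sqrt (by positivity)]
    have h2 : ∑ t : Fin l × Fin p × Fin n, (Y t.1 t.2.1 t.2.2)^2
        = ∑ ki : Fin n × Fin l, ∑ j, (Y ki.2 j ki.1)^2 :=
      sum_tensor_eq (fun i j kk => (Y i j kk)^2)
    have h3 : ∑ t : Fin l × Fin p × Fin n, (Y t.1 t.2.1 t.2.2)^2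
        = ∑ i, ∑ j, ∑ kk, (Y i j kk)^2 := by
      rw [Fintype.sum_prod_type]
      exact Finset.sum_congr rfl fun i _ => Fintype.sum_prod_type _
    rw [h1, ← h3, h2]
    exact Finset.sum_congr rfl fun ki _ => Finset.sum_congr rfl fun j _ => by
      simp [unfoldT]
  have hσsq : (⨆ j, (hermT (bcirc A)).eigenvalues j) ≤ σ^2 := by
    by_cases hc0 : 0 ≤ (⨆ j, (hermT (bcirc A)).eigenvalues j)
    · rw [hσ, sigmaMax, Real.sq_sqrt hc0]
    · exact le_trans (le_of_not_ge hc0) (sq_nonneg σ)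
  -- main inequality
  have hsum : (G.card : ℝ) * Q^2 ≤ σ^2 * F^2 := by
    calc (G.card : ℝ) * Q^2 = ∑ _t ∈ G, Q^2 := by
          rw [Finset.sum_const, nsmul_eq_mul]
      _ ≤ ∑ t ∈ G, (f t)^2 := by
          refine Finset.sum_le_sum fun t ht => ?_
          rw [hG, Finset.mem_filter] at ht
          exact pow_le_pow_left₀ hQ0 ht.2.1 2
      _ = ∑ t ∈ G, (tMul A Y t.1 t.2.1 t.2.2)^2 := by
          refine Finset.sum_congr rfl fun t ht => ?_
          rw [hG, Finset.mem_filter] at ht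
          rw [hEt t ht.2.2, sq_abs]
      _ ≤ ∑ t : Fin m × Fin p × Fin n, (tMul A Y t.1 t.2.1 t.2.2)^2 :=
          Finset.sum_le_univ_sum_of_nonneg fun t => sq_nonneg _
      _ = ∑ ki : Fin n × Fin m, ∑ j, ((bcirc A * unfoldT Y) ki j)^2 := by
          rw [sum_tensor_eq (fun i j kk => (tMul A Y i j kk)^2)]
          exact Finset.sum_congr rfl fun ki _ => Finset.sum_congr rfl fun j _ => by
            rw [tMul]
      _ ≤ (⨆ j, (hermT (bcirc A)).eigenvalues j)
            * ∑ ki, ∑ j, (unfoldT Y ki j)^2 := mul_sq_sum_le (bcirc A) (unfoldT Y)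
      _ ≤ σ^2 * F^2 := by
          rw [hFsq]
          refine mul_le_mul_of_nonneg_right hσsq ?_
          positivity
  have hQD : Q^2 * (((N:ℕ):ℝ) * (1 - β - q)) ≤ σ^2 * F^2 := by nlinarith [sq_nonneg Q]
  rw [← hNcast]
  have hsD : 0 < Real.sqrt (((N:ℕ):ℝ) * (1 - β - q)) := Real.sqrt_pos.mpr hDpos
  rw [div_mul_eq_mul_div, le_div_iff₀ hsD]
  have hmul0 : 0 ≤ Q * Real.sqrt (((N:ℕ):ℝ) * (1 - β - q)) := by positivity
  have hsq2 : (Q * Real.sqrt (((N:ℕ):ℝ) * (1 - β - q)))^2 ≤ (σ * F)^2 := by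
    rw [mul_pow, mul_pow, Real.sq_sqrt hDpos.le]
    exact hQD
  calc Q * Real.sqrt (((N:ℕ):ℝ) * (1 - β - q))
      = Real.sqrt ((Q * Real.sqrt (((N:ℕ):ℝ) * (1 - β - q)))^2) := (Real.sqrt_sq hmul0).symm
    _ ≤ Real.sqrt ((σ * F)^2) := Real.sqrt_le_sqrt hsq2
    _ = σ * F := Real.sqrt_sq (by positivity)
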